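/- If G is a chi-squared random variable with k degrees of freedom, then for any x > 0, P(G ≥ k + 2√(xk) + 2x) ≤ exp(−x). -/

import Mathlib

open MeasureTheory ProbabilityTheory Real
open scoped ENNReal NNReal

lemma LM_log_le {v : ℝ} (hv : 0 ≤ v) :
    Real.log (1 + v) ≤ (2*v + v^2) / (2*(1+v)) := by
  have hw : (0:ℝ) < 1 + v := by linarith
  have hr : 0 ≤ Real.log (1+v) := Real.log_nonneg (by linarith)
  have h := Real.self_le_sinh_iff.mpr hr
  rw [Real.sinh_eq, Real.exp_log hw, Real.exp_neg, Real.exp_log hw] at h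
  calc Real.log (1+v) ≤ ((1+v) - (1+v)⁻¹)/2 := h
  _ = (2*v + v^2)/(2*(1+v)) := by field_simp; ring

lemma LM_gauss_eq {t : ℝ} :
    (fun y : ℝ => gaussianPDFReal 0 1 y * Real.exp (t * y^2))
      = fun y : ℝ => (Real.sqrt (2*π))⁻¹ * Real.exp (-(1/2 - t) * y^2) := by
  funext y
  simp only [gaussianPDFReal, NNReal.coe_one, mul_one, sub_zero, one_div]
  rw [mul_assoc, ← Real.exp_add]
  ring_nf

lemma LM_integrable_gauss {t : ℝ} (ht : t < 1/2) :
    Integrable (fun y : ℝ => Real.exp (t * y^2)) (gaussianReal 0 1) := by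
  rw [gaussianReal_of_var_ne_zero _ one_ne_zero]
  have hm : Measurable fun y : ℝ => (gaussianPDFReal 0 1 y).toNNReal :=
    (measurable_gaussianPDFReal 0 1).real_toNNReal
  have h1 : gaussianPDF 0 1 = fun y => ((gaussianPDFReal 0 1 y).toNNReal : ℝ≥0∞) := by
    funext y; rfl
  rw [h1, integrable_withDensity_iff_integrable_smul hm]
  have : (fun y : ℝ => (gaussianPDFReal 0 1 y).toNNReal • Real.exp (t * y^2))
      = fun y : ℝ => (Real.sqrt (2*π))⁻¹ * Real.exp (-(1/2 - t) * y^2) := by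
    funext y
    rw [NNReal.smul_def, smul_eq_mul, Real.coe_toNNReal _ (gaussianPDFReal_nonneg 0 1 y)]
    exact congrFun LM_gauss_eq y
  rw [this]
  exact (integrable_exp_neg_mul_sq (by linarith)).const_mul _

lemma LM_integral_gauss {t : ℝ} (ht : t < 1/2) :
    ∫ y, Real.exp (t * y^2) ∂(gaussianReal 0 1) = (Real.sqrt (1 - 2*t))⁻¹ := by
  rw [gaussianReal_of_var_ne_zero _ one_ne_zero]
  have hm : Measurable fun y : ℝ => (gaussianPDFReal 0 1 y).toNNReal :=
    (measurable_gaussianPDFReal 0 1).real_toNNReal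
  have h1 : gaussianPDF 0 1 = fun y => ((gaussianPDFReal 0 1 y).toNNReal : ℝ≥0∞) := by
    funext y; rfl
  rw [h1, integral_withDensity_eq_integral_smul hm]
  have h2 : (fun y : ℝ => (gaussianPDFReal 0 1 y).toNNReal • Real.exp (t * y^2))
      = fun y : ℝ => (Real.sqrt (2*π))⁻¹ * Real.exp (-(1/2 - t) * y^2) := by
    funext y
    rw [NNReal.smul_def, smul_eq_mul, Real.coe_toNNReal _ (gaussianPDFReal_nonneg 0 1 y)]
    exact congrFun LM_gauss_eq y
  rw [h2, integral_const_mul, integral_gaussian]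
  have hpos : (0:ℝ) < 1/2 - t := by linarith
  have h2t : (0:ℝ) < 1 - 2*t := by linarith
  rw [← Real.sqrt_inv, ← Real.sqrt_mul (by positivity), ← Real.sqrt_inv]
  congr 1
  have hπ : (0:ℝ) < π := Real.pi_pos
  field_simp

lemma LM_iIndepFun_ae_eq {Ω : Type*} [MeasureSpace Ω] {ι : Type*} {Z Z' : ι → Ω → ℝ}
    (h : iIndepFun Z ℙ) (hae : ∀ i, Z i =ᵐ[ℙ] Z' i) :
    iIndepFun Z' ℙ := by
  rw [iIndepFun_iff_measure_inter_preimage_eq_mul] at h ⊢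
  intro S sets hsets
  have key : ∀ i : ι, ∀ s : Set ℝ, (Z' i ⁻¹' s : Set Ω) =ᵐ[ℙ] (Z i ⁻¹' s : Set Ω) := by
    intro i s
    filter_upwards [hae i] with ω hω
    show (Z' i ω ∈ s) = (Z i ω ∈ s)
    rw [hω]
  have h1 : ∀ i ∈ S, (ℙ : Measure Ω) (Z' i ⁻¹' sets i) = ℙ (Z i ⁻¹' sets i) :=
    fun i _ => measure_congr (key i (sets i))
  have h2 : ((⋂ i ∈ S, Z' i ⁻¹' sets i : Set Ω)) =ᵐ[ℙ] (⋂ i ∈ S, Z i ⁻¹' sets i : Set Ω) := by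
    have hall : ∀ᵐ ω ∂(ℙ : Measure Ω), ∀ i ∈ S, Z i ω = Z' i ω :=
      (Filter.eventually_all_finset S).mpr fun i _ => hae i
    filter_upwards [hall] with ω hω
    show (ω ∈ ⋂ i ∈ S, Z' i ⁻¹' sets i) = (ω ∈ ⋂ i ∈ S, Z i ⁻¹' sets i)
    simp only [Set.mem_iInter, Set.mem_preimage, eq_iff_iff]
    constructor <;> intro hmem i hi
    · rw [hω i hi]; exact hmem i hi
    · rw [← hω i hi]; exact hmem i hi
  rw [measure_congr h2, h S hsets]
  exact (Finset.prod_congr rfl h1).symm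

/-- Laurent–Massart upper tail bound for a chi-squared random variable with `k`
degrees of freedom, realised as a sum of squares of `k` i.i.d. standard Gaussians. -/
theorem laurent_massart_chisq_upper_tail
    {Ω : Type*} [MeasureSpace Ω] [IsProbabilityMeasure (ℙ : Measure Ω)]
    (k : ℕ) (Z : Fin k → Ω → ℝ)
    (hindep : iIndepFun Z ℙ)
    (hlaw : ∀ i, Measure.map (Z i) ℙ = gaussianReal 0 1)
    (G : Ω → ℝ) (hG : ∀ ω, G ω = ∑ i, (Z i ω) ^ 2)
    (x : ℝ) (hx : 0 < x) :
    ℙ {ω | (k : ℝ) + 2 * Real.sqrt (x * k) + 2 * x ≤ G ω} ≤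
      ENNReal.ofReal (Real.exp (-x)) := by
  rcases Nat.eq_zero_or_pos k with hk0 | hk
  · subst hk0
    have hempty : {ω | ((0:ℕ) : ℝ) + 2 * Real.sqrt (x * (0:ℕ)) + 2 * x ≤ G ω} = (∅ : Set Ω) := by
      ext ω
      simp only [Set.mem_setOf_eq, Set.mem_empty_iff_false, iff_false, not_le]
      have hGω : G ω = 0 := by rw [hG]; simp
      have hs0 : Real.sqrt (x * ((0:ℕ):ℝ)) = 0 := by simp
      rw [hGω, hs0]
      push_cast
      linarith
    rw [hempty]
    simp
  · have hkR : (0:ℝ) < k := Nat.cast_pos.mpr hk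
    set s := Real.sqrt (x / k) with hs_def
    have hs : 0 < s := Real.sqrt_pos.mpr (by positivity)
    have hs2 : s^2 = x / k := Real.sq_sqrt (by positivity)
    have hx_eq : x = k * s^2 := by rw [hs2]; field_simp
    have hsqrt : Real.sqrt (x * k) = k * s := by
      have hxk : x * (k:ℝ) = (x / k) * (k:ℝ)^2 := by field_simp
      rw [hxk, Real.sqrt_mul (by positivity), Real.sqrt_sq hkR.le, ← hs_def, mul_comm]
    set t := s / (1 + 2*s) with ht_def
    have h12s : (0:ℝ) < 1 + 2*s := by linarith
    have ht_pos : 0 < t := by positivity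
    have ht_lt : t < 1/2 := by
      rw [ht_def, div_lt_iff₀ h12s]; linarith
    have h1_2t : 1 - 2*t = (1 + 2*s)⁻¹ := by
      rw [ht_def]; field_simp; ring
    -- measurable modifications
    have hZae : ∀ i, AEMeasurable (Z i) ℙ := by
      intro i
      by_contra hcon
      have h0 := Measure.map_of_not_aemeasurable hcon
      rw [hlaw i] at h0
      exact (IsProbabilityMeasure.ne_zero (gaussianReal 0 1)) h0
    set Z' : Fin k → Ω → ℝ := fun i => (hZae i).mk (Z i) with hZ'_def
    have hZ'meas : ∀ i, Measurable (Z' i) := fun i => (hZae i).measurable_mk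
    have haeeq : ∀ i, Z i =ᵐ[ℙ] Z' i := fun i => (hZae i).ae_eq_mk
    have hlaw' : ∀ i, Measure.map (Z' i) ℙ = gaussianReal 0 1 := fun i => by
      rw [← Measure.map_congr (haeeq i), hlaw i]
    have hindep' := LM_iIndepFun_ae_eq hindep haeeq
    set Y : Fin k → Ω → ℝ := fun i ω => (Z' i ω)^2 with hY_def
    have hYmeas : ∀ i, Measurable (Y i) := fun i => (hZ'meas i).pow_const 2
    have hYindep : iIndepFun Y ℙ :=
      hindep'.comp (fun _ y => y^2) (fun _ => measurable_id.pow_const 2)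
    have hg_meas : Measurable fun y : ℝ => Real.exp (t * y^2) :=
      ((measurable_id.pow_const 2).const_mul t).exp
    have hYint : ∀ i, Integrable (fun ω => Real.exp (t * Y i ω)) ℙ := by
      intro i
      have h := LM_integrable_gauss ht_lt
      rw [← hlaw' i,
        integrable_map_measure hg_meas.aestronglyMeasurable (hZ'meas i).aemeasurable] at h
      exact h
    have hmgf_i : ∀ i, mgf (Y i) ℙ t = (Real.sqrt (1 - 2*t))⁻¹ := by
      intro i
      have h := LM_integral_gauss ht_lt
      rw [← hlaw' i, integral_map (hZ'meas i).aemeasurable hg_meas.aestronglyMeasurable] at h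
      exact h
    set a : ℝ := (k:ℝ) + 2 * Real.sqrt (x * k) + 2 * x with ha_def
    have hsum_int : Integrable (fun ω => Real.exp (t * (∑ i, Y i) ω)) ℙ :=
      hYindep.integrable_exp_mul_sum hYmeas (fun i _ => hYint i)
    have hchern := measure_ge_le_exp_mul_mgf (X := ∑ i, Y i) (μ := ℙ) a ht_pos.le hsum_int
    have hmgf_sum : mgf (∑ i, Y i) ℙ t = ((Real.sqrt (1 - 2*t))⁻¹)^k := by
      rw [hYindep.mgf_sum hYmeas Finset.univ]
      simp [hmgf_i]
    -- sets agree a.e.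
    have hsets : (ℙ : Measure Ω) {ω | a ≤ G ω} = ℙ {ω | a ≤ (∑ i, Y i) ω} := by
      apply measure_congr
      have hall : ∀ᵐ ω ∂(ℙ : Measure Ω), ∀ i, Z i ω = Z' i ω := ae_all_iff.mpr haeeq
      filter_upwards [hall] with ω hω
      show (a ≤ G ω) = (a ≤ (∑ i, Y i) ω)
      have : G ω = (∑ i, Y i) ω := by
        rw [hG ω]
        simp only [Finset.sum_apply]
        exact Finset.sum_congr rfl fun i _ => by rw [hω i]
      rw [this]
    -- final real inequality
    have hfinal : Real.exp (-t*a) * mgf (∑ i, Y i) ℙ t ≤ Real.exp (-x) := by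
      rw [hmgf_sum]
      have hsqrt_inv : (Real.sqrt (1 - 2*t))⁻¹ = Real.sqrt (1 + 2*s) := by
        rw [h1_2t, Real.sqrt_inv, inv_inv]
      rw [hsqrt_inv]
      have hsqe : Real.sqrt (1+2*s) = Real.exp (Real.log (1+2*s) / 2) := by
        rw [← Real.exp_log (Real.sqrt_pos.mpr h12s), Real.log_sqrt h12s.le]
      rw [hsqe, ← Real.exp_nat_mul, ← Real.exp_add]
      apply Real.exp_le_exp.mpr
      -- -t*a + k * (log(1+2s)/2) ≤ -x
      have hlog := LM_log_le (v := 2*s) (by linarith)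
      have hlog' : Real.log (1+2*s) ≤ 2*(s+s^2)/(1+2*s) := by
        calc Real.log (1+2*s) ≤ (2*(2*s) + (2*s)^2)/(2*(1+2*s)) := hlog
        _ = 2*(s+s^2)/(1+2*s) := by field_simp
      have hta : t * a = ((k:ℝ)*s + 2*k*s^2 + 2*k*s^3) / (1+2*s) := by
        rw [ht_def, ha_def, hsqrt]
        rw [hx_eq]
        field_simp
      have key : -(t*a) + (k:ℝ)*(s+s^2)/(1+2*s) = -x := by
        rw [hta, hx_eq]
        field_simp
        ring
      have h3 : (k:ℝ) * (Real.log (1+2*s)/2) ≤ (k:ℝ)*(s+s^2)/(1+2*s) := by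
        calc (k:ℝ) * (Real.log (1+2*s)/2)
            ≤ (k:ℝ) * (2*(s+s^2)/(1+2*s)/2) := by
              apply mul_le_mul_of_nonneg_left _ hkR.le
              linarith
        _ = (k:ℝ)*(s+s^2)/(1+2*s) := by ring
      linarith
    calc ℙ {ω | a ≤ G ω} = ℙ {ω | a ≤ (∑ i, Y i) ω} := hsets
    _ = ENNReal.ofReal ((ℙ {ω | a ≤ (∑ i, Y i) ω}).toReal) :=
        (ENNReal.ofReal_toReal (measure_ne_top _ _)).symm
    _ ≤ ENNReal.ofReal (Real.exp (-t*a) * mgf (∑ i, Y i) ℙ t) :=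
        ENNReal.ofReal_le_ofReal hchern
    _ ≤ ENNReal.ofReal (Real.exp (-x)) := ENNReal.ofReal_le_ofReal hfinal
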